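/- Let N ≥ 1, let S ⊆ ℝ^N be compact, let h ∈ B_S, let D_1, …, D_M ⊆ ℝ^N be bounded measurable sets each with nonempty interior, and let ω_1, …, ω_M ∈ (0,1] with ω_1 + ⋯ + ω_M = 1. Define T_h f = Σ_{m=1}^M ω_m P_S(f + χ_{D_m}(h − f)), and the sequence f_0 = Σ_{m=1}^M P_S(χ_{D_m} h), f_{k+1} = T_h f_k for k ≥ 0. Then f_k converges strongly to h in L²(ℝ^N), i.e., ‖f_k − h‖ → 0 as k → ∞. -/

import Mathlib

open MeasureTheory FourierTransform Filter

noncomputable section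

/-- The Hilbert space `L²(ℝᴺ; ℂ)` of square-integrable functions on `ℝᴺ`. -/
abbrev L2Space (N : ℕ) : Type :=
  Lp ℂ 2 (volume : Measure (EuclideanSpace ℝ (Fin N)))

/-- `f ∈ L²(ℝᴺ)` is bandlimited to `S`: its Fourier transform vanishes (a.e.) outside `S`;
equivalently, `f` agrees a.e. with the inverse Fourier transform of an integrable function `F`
vanishing outside `S`. -/
def IsBandlimited {N : ℕ} (S : Set (EuclideanSpace ℝ (Fin N))) (f : L2Space N) : Prop :=
  ∃ F : EuclideanSpace ℝ (Fin N) → ℂ,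
    Integrable F ∧ (∀ k, k ∉ S → F k = 0) ∧
      (f : EuclideanSpace ℝ (Fin N) → ℂ) =ᵐ[volume] 𝓕⁻ F

/-- Multiplication of `f ∈ L²` by the indicator function `χ_D`, as an element of `L²`. -/
def chiMul {N : ℕ} {D : Set (EuclideanSpace ℝ (Fin N))} (hD : MeasurableSet D)
    (f : L2Space N) : L2Space N :=
  ((Lp.memLp f).indicator hD).toLp (D.indicator f)

/-- The orthogonal projection of `L²(ℝᴺ)` onto a closed subspace `K`. -/
def projOf {N : ℕ} (K : Submodule ℂ (L2Space N)) (hK : IsClosed (K : Set (L2Space N))) :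
    L2Space N → L2Space N :=
  haveI : CompleteSpace K := hK.completeSpace_coe
  fun f => (K.orthogonalProjectionOnto f : L2Space N)

/-- The operator `T_h^{(D)} f = P_S (f + χ_D (h − f))` (single region). -/
def Tsingle {N : ℕ} (K : Submodule ℂ (L2Space N)) (hK : IsClosed (K : Set (L2Space N)))
    {D : Set (EuclideanSpace ℝ (Fin N))} (hD : MeasurableSet D)
    (h f : L2Space N) : L2Space N :=
  projOf K hK (f + chiMul hD (h - f))

/-- The operator `T_h f = ∑ m, ω m • P_S (f + χ_{D m} (h − f))` (multiple weighted regions). -/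
def Tmulti {N : ℕ} (K : Submodule ℂ (L2Space N)) (hK : IsClosed (K : Set (L2Space N)))
    {M : ℕ} {D : Fin M → Set (EuclideanSpace ℝ (Fin N))} (hD : ∀ m, MeasurableSet (D m))
    (ω : Fin M → ℝ) (h f : L2Space N) : L2Space N :=
  ∑ m, ω m • projOf K hK (f + chiMul (hD m) (h - f))

namespace Aux10

local notation "⟪" x ", " y "⟫" => @inner ℂ _ _ x y

variable {N : ℕ}

lemma chiMul_ae {D : Set (EuclideanSpace ℝ (Fin N))} (hD : MeasurableSet D) (f : L2Space N) :
    (chiMul hD f : EuclideanSpace ℝ (Fin N) → ℂ) =ᵐ[volume] D.indicator f :=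
  MemLp.coeFn_toLp _

lemma chiMul_sub {D : Set (EuclideanSpace ℝ (Fin N))} (hD : MeasurableSet D) (f g : L2Space N) :
    chiMul hD (f - g) = chiMul hD f - chiMul hD g := by
  apply Lp.ext
  filter_upwards [chiMul_ae hD (f - g), chiMul_ae hD f, chiMul_ae hD g,
    Lp.coeFn_sub (chiMul hD f) (chiMul hD g), Lp.coeFn_sub f g] with x h1 h2 h3 h4 h5
  rw [h1, h4, Pi.sub_apply, h2, h3]
  by_cases hx : x ∈ D
  · rw [Set.indicator_of_mem hx, Set.indicator_of_mem hx, Set.indicator_of_mem hx, h5,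
      Pi.sub_apply]
  · rw [Set.indicator_of_notMem hx, Set.indicator_of_notMem hx, Set.indicator_of_notMem hx,
      sub_zero]

lemma chiMul_smul_real {D : Set (EuclideanSpace ℝ (Fin N))} (hD : MeasurableSet D) (t : ℝ)
    (f : L2Space N) : chiMul hD (t • f) = t • chiMul hD f := by
  apply Lp.ext
  filter_upwards [chiMul_ae hD (t • f), chiMul_ae hD f,
    Lp.coeFn_smul t (chiMul hD f), Lp.coeFn_smul t f] with x h1 h2 h3 h4
  rw [h1, h3]
  simp only [Pi.smul_apply, h2, h4]
  by_cases hx : x ∈ D <;> simp [hx, h4, Complex.real_smul]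

lemma inner_chiMul_right {D : Set (EuclideanSpace ℝ (Fin N))} (hD : MeasurableSet D)
    (f g : L2Space N) : ⟪f, chiMul hD g⟫ = ⟪chiMul hD f, chiMul hD g⟫ := by
  rw [L2.inner_def, L2.inner_def]
  apply integral_congr_ae
  filter_upwards [chiMul_ae hD f, chiMul_ae hD g] with x h1 h2
  rw [h1, h2]
  by_cases hx : x ∈ D <;> simp [hx]

lemma inner_chiMul_left {D : Set (EuclideanSpace ℝ (Fin N))} (hD : MeasurableSet D)
    (f g : L2Space N) : ⟪chiMul hD f, g⟫ = ⟪chiMul hD f, chiMul hD g⟫ := by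
  rw [L2.inner_def, L2.inner_def]
  apply integral_congr_ae
  filter_upwards [chiMul_ae hD f, chiMul_ae hD g] with x h1 h2
  rw [h1, h2]
  by_cases hx : x ∈ D <;> simp [hx]

lemma inner_chiMul_symm {D : Set (EuclideanSpace ℝ (Fin N))} (hD : MeasurableSet D)
    (f g : L2Space N) : ⟪chiMul hD f, g⟫ = ⟪f, chiMul hD g⟫ := by
  rw [inner_chiMul_left hD f g, ← inner_chiMul_right hD f g]


variable (K : Submodule ℂ (L2Space N)) (hK : IsClosed (K : Set (L2Space N)))

lemma projOf_mem (x : L2Space N) : projOf K hK x ∈ K := by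
  haveI : CompleteSpace K := hK.completeSpace_coe
  exact (K.orthogonalProjectionOnto x).2

lemma projOf_eq_self {x : L2Space N} (hx : x ∈ K) : projOf K hK x = x := by
  haveI : CompleteSpace K := hK.completeSpace_coe
  exact congrArg Subtype.val (Submodule.orthogonalProjectionOnto_mem_subspace_eq_self (K := K) ⟨x, hx⟩)

lemma projOf_sub (x y : L2Space N) :
    projOf K hK (x - y) = projOf K hK x - projOf K hK y := by
  haveI : CompleteSpace K := hK.completeSpace_coe
  simp only [projOf, map_sub, Submodule.coe_sub]

lemma projOf_norm_le (x : L2Space N) : ‖projOf K hK x‖ ≤ ‖x‖ := by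
  haveI : CompleteSpace K := hK.completeSpace_coe
  calc ‖projOf K hK x‖ = ‖K.orthogonalProjectionOnto x‖ := rfl
    _ ≤ ‖K.orthogonalProjectionOnto‖ * ‖x‖ := (K.orthogonalProjectionOnto).le_opNorm x
    _ ≤ 1 * ‖x‖ := by
        exact mul_le_mul_of_nonneg_right (Submodule.orthogonalProjectionOnto_norm_le K) (norm_nonneg x)
    _ = ‖x‖ := one_mul _

lemma inner_projOf_left (x : L2Space N) {y : L2Space N} (hy : y ∈ K) :
    ⟪projOf K hK x, y⟫ = ⟪x, y⟫ := by
  haveI : CompleteSpace K := hK.completeSpace_coe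
  have h1 := Submodule.inner_orthogonalProjectionOnto_eq_of_mem_right (K := K) ⟨y, hy⟩ x
  rw [Submodule.coe_inner] at h1
  exact h1

lemma inner_projOf_right {x : L2Space N} (hx : x ∈ K) (y : L2Space N) :
    ⟪x, projOf K hK y⟫ = ⟪x, y⟫ := by
  haveI : CompleteSpace K := hK.completeSpace_coe
  exact Submodule.inner_orthogonalProjectionOnto_eq_of_mem_left (K := K) ⟨x, hx⟩ y


lemma inner_chiMul_self {D : Set (EuclideanSpace ℝ (Fin N))} (hD : MeasurableSet D)
    (f : L2Space N) : ⟪f, chiMul hD f⟫ = ((‖chiMul hD f‖ ^ 2 : ℝ) : ℂ) := by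
  rw [inner_chiMul_right hD f f, inner_self_eq_norm_sq_to_K]
  norm_cast

lemma norm_sub_chiMul_sq {D : Set (EuclideanSpace ℝ (Fin N))} (hD : MeasurableSet D)
    (f : L2Space N) : ‖f - chiMul hD f‖ ^ 2 = ‖f‖ ^ 2 - ‖chiMul hD f‖ ^ 2 := by
  have h := norm_sub_sq (𝕜 := ℂ) f (chiMul hD f)
  rw [inner_chiMul_self hD f] at h
  simp only [RCLike.re_to_complex, Complex.ofReal_re] at h
  rw [h]; ring

lemma norm_sub_chiMul_le {D : Set (EuclideanSpace ℝ (Fin N))} (hD : MeasurableSet D)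
    (f : L2Space N) : ‖f - chiMul hD f‖ ≤ ‖f‖ := by
  have h := norm_sub_chiMul_sq hD f
  nlinarith [norm_nonneg (f - chiMul hD f), norm_nonneg f, sq_nonneg ‖chiMul hD f‖]

lemma inner_sub_chiMul_chiMul {D : Set (EuclideanSpace ℝ (Fin N))} (hD : MeasurableSet D)
    (f : L2Space N) : ⟪f - chiMul hD f, chiMul hD f⟫ = 0 := by
  rw [inner_sub_left, inner_chiMul_self hD f, inner_self_eq_norm_sq_to_K]
  norm_cast
  exact sub_self _


lemma real_smul_L2 (r : ℝ) (x : L2Space N) : r • x = ((r : ℂ)) • x := by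
  rw [← smul_one_smul ℂ r x, Complex.real_smul, mul_one]

lemma inner_real_smul_left (r : ℝ) (x y : L2Space N) : ⟪r • x, y⟫ = (r : ℂ) * ⟪x, y⟫ := by
  rw [real_smul_L2, inner_smul_left, Complex.conj_ofReal]

section Aop

variable {M : ℕ} {D : Fin M → Set (EuclideanSpace ℝ (Fin N))}

/-- The error-propagation operator `A x = ∑ m, ω m • P (x - χ_m x)`. -/
def Aop (hD : ∀ m, MeasurableSet (D m)) (ω : Fin M → ℝ) (x : L2Space N) : L2Space N :=
  ∑ m, ω m • projOf K hK (x - chiMul (hD m) x)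

variable (hD : ∀ m, MeasurableSet (D m)) (ω : Fin M → ℝ)

lemma Aop_mem (x : L2Space N) : Aop K hK hD ω x ∈ K :=
  Submodule.sum_mem _ fun m _ => Submodule.smul_of_tower_mem _ _ (projOf_mem K hK _)

lemma Aop_sub (x y : L2Space N) :
    Aop K hK hD ω (x - y) = Aop K hK hD ω x - Aop K hK hD ω y := by
  unfold Aop
  rw [← Finset.sum_sub_distrib]
  refine Finset.sum_congr rfl fun m _ => ?_
  rw [chiMul_sub, ← smul_sub, ← projOf_sub]
  congr 1
  congr 1
  abel

lemma inner_P_sub_chiMul {DD : Set (EuclideanSpace ℝ (Fin N))} (hDD : MeasurableSet DD)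
    {x : L2Space N} (hx : x ∈ K) :
    ⟪projOf K hK (x - chiMul hDD x), x⟫ = ((‖x - chiMul hDD x‖ ^ 2 : ℝ) : ℂ) := by
  rw [inner_projOf_left K hK _ hx]
  calc ⟪x - chiMul hDD x, x⟫
      = ⟪x - chiMul hDD x, (x - chiMul hDD x) + chiMul hDD x⟫ := by rw [sub_add_cancel]
    _ = ⟪x - chiMul hDD x, x - chiMul hDD x⟫ + ⟪x - chiMul hDD x, chiMul hDD x⟫ :=
        inner_add_right _ _ _
    _ = ((‖x - chiMul hDD x‖ ^ 2 : ℝ) : ℂ) := by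
        rw [inner_sub_chiMul_chiMul hDD x, add_zero, inner_self_eq_norm_sq_to_K]
        norm_cast

lemma inner_Aop_self {x : L2Space N} (hx : x ∈ K) :
    ⟪Aop K hK hD ω x, x⟫ = ((∑ m, ω m * ‖x - chiMul (hD m) x‖ ^ 2 : ℝ) : ℂ) := by
  unfold Aop
  rw [sum_inner, Complex.ofReal_sum]
  refine Finset.sum_congr rfl fun m _ => ?_
  rw [inner_real_smul_left, inner_P_sub_chiMul K hK (hD m) hx]
  push_cast
  ring

lemma Aop_norm_le (hω0 : ∀ m, 0 ≤ ω m) (hωsum : ∑ m, ω m = 1) (x : L2Space N) :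
    ‖Aop K hK hD ω x‖ ≤ ‖x‖ := by
  calc ‖Aop K hK hD ω x‖ ≤ ∑ m, ‖ω m • projOf K hK (x - chiMul (hD m) x)‖ :=
        norm_sum_le _ _
    _ ≤ ∑ m, ω m * ‖x‖ := by
        refine Finset.sum_le_sum fun m _ => ?_
        rw [norm_smul, Real.norm_eq_abs, abs_of_nonneg (hω0 m)]
        exact mul_le_mul_of_nonneg_left
          ((projOf_norm_le K hK _).trans (norm_sub_chiMul_le (hD m) x)) (hω0 m)
    _ = ‖x‖ := by rw [← Finset.sum_mul, hωsum, one_mul]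

lemma norm_Aop_le_sum (x : L2Space N) :
    ‖Aop K hK hD ω x‖ ≤ ∑ m, |ω m| * ‖x - chiMul (hD m) x‖ := by
  calc ‖Aop K hK hD ω x‖ ≤ ∑ m, ‖ω m • projOf K hK (x - chiMul (hD m) x)‖ :=
        norm_sum_le _ _
    _ ≤ ∑ m, |ω m| * ‖x - chiMul (hD m) x‖ := by
        refine Finset.sum_le_sum fun m _ => ?_
        rw [norm_smul, Real.norm_eq_abs]
        exact mul_le_mul_of_nonneg_left (projOf_norm_le K hK _) (abs_nonneg _)

lemma norm_Aop_sq_le (hω0 : ∀ m, 0 ≤ ω m) (hωsum : ∑ m, ω m = 1) {x : L2Space N}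
    (hx : x ∈ K) : ‖Aop K hK hD ω x‖ ^ 2 ≤ (⟪Aop K hK hD ω x, x⟫).re := by
  have h1 : ‖Aop K hK hD ω x‖ ≤ ∑ m, Real.sqrt (ω m) * (Real.sqrt (ω m) * ‖x - chiMul (hD m) x‖) := by
    refine (norm_Aop_le_sum K hK hD ω x).trans_eq ?_
    refine Finset.sum_congr rfl fun m _ => ?_
    rw [← mul_assoc, Real.mul_self_sqrt (hω0 m), abs_of_nonneg (hω0 m)]
  have h2 : (∑ m, Real.sqrt (ω m) * (Real.sqrt (ω m) * ‖x - chiMul (hD m) x‖)) ^ 2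
      ≤ (∑ m, Real.sqrt (ω m) ^ 2) * ∑ m, (Real.sqrt (ω m) * ‖x - chiMul (hD m) x‖) ^ 2 :=
    Finset.sum_mul_sq_le_sq_mul_sq _ _ _
  have h3 : (∑ m, Real.sqrt (ω m) ^ 2) = 1 := by
    rw [← hωsum]
    exact Finset.sum_congr rfl fun m _ => Real.sq_sqrt (hω0 m)
  have h4 : (∑ m, (Real.sqrt (ω m) * ‖x - chiMul (hD m) x‖) ^ 2)
      = ∑ m, ω m * ‖x - chiMul (hD m) x‖ ^ 2 := by
    refine Finset.sum_congr rfl fun m _ => ?_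
    rw [mul_pow, Real.sq_sqrt (hω0 m)]
  rw [inner_Aop_self K hK hD ω hx, Complex.ofReal_re]
  have h5 : ‖Aop K hK hD ω x‖ ^ 2
      ≤ (∑ m, Real.sqrt (ω m) * (Real.sqrt (ω m) * ‖x - chiMul (hD m) x‖)) ^ 2 := by
    have hnn : (0 : ℝ) ≤ ‖Aop K hK hD ω x‖ := norm_nonneg _
    exact pow_le_pow_left₀ hnn h1 2
  calc ‖Aop K hK hD ω x‖ ^ 2
      ≤ (∑ m, Real.sqrt (ω m) ^ 2) * ∑ m, (Real.sqrt (ω m) * ‖x - chiMul (hD m) x‖) ^ 2 :=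
        h5.trans h2
    _ = ∑ m, ω m * ‖x - chiMul (hD m) x‖ ^ 2 := by rw [h3, one_mul, h4]

lemma Aop_symm {x y : L2Space N} (hx : x ∈ K) (hy : y ∈ K) :
    ⟪Aop K hK hD ω x, y⟫ = ⟪x, Aop K hK hD ω y⟫ := by
  unfold Aop
  rw [sum_inner, inner_sum]
  refine Finset.sum_congr rfl fun m _ => ?_
  rw [inner_real_smul_left, real_smul_L2, inner_smul_right]
  congr 1
  rw [inner_projOf_left K hK _ hy, inner_projOf_right K hK hx, inner_sub_left, inner_sub_right,
    inner_chiMul_symm]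


lemma re_inner_Aop_nonneg (hω0 : ∀ m, 0 ≤ ω m) {x : L2Space N} (hx : x ∈ K) :
    0 ≤ (⟪Aop K hK hD ω x, x⟫).re := by
  rw [inner_Aop_self K hK hD ω hx, Complex.ofReal_re]
  exact Finset.sum_nonneg fun m _ => mul_nonneg (hω0 m) (sq_nonneg _)

lemma re_inner_Aop_le (hω0 : ∀ m, 0 ≤ ω m) (hωsum : ∑ m, ω m = 1) {x : L2Space N}
    (hx : x ∈ K) : (⟪Aop K hK hD ω x, x⟫).re ≤ ‖x‖ ^ 2 := by
  rw [inner_Aop_self K hK hD ω hx, Complex.ofReal_re]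
  calc (∑ m, ω m * ‖x - chiMul (hD m) x‖ ^ 2) ≤ ∑ m, ω m * ‖x‖ ^ 2 := by
        refine Finset.sum_le_sum fun m _ => ?_
        exact mul_le_mul_of_nonneg_left
          (pow_le_pow_left₀ (norm_nonneg _) (norm_sub_chiMul_le (hD m) x) 2) (hω0 m)
    _ = ‖x‖ ^ 2 := by rw [← Finset.sum_mul, hωsum, one_mul]

lemma tendsto_iterate (hω0 : ∀ m, 0 ≤ ω m) (hωsum : ∑ m, ω m = 1) {e : L2Space N}
    (he : e ∈ K) :
    ∃ g : L2Space N, g ∈ K ∧ Aop K hK hD ω g = g ∧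
      Tendsto (fun n => (Aop K hK hD ω)^[n] e) atTop (nhds g) := by
  set A : L2Space N → L2Space N := Aop K hK hD ω with hA
  have hmem : ∀ n, A^[n] e ∈ K := by
    intro n
    induction n with
    | zero => simpa using he
    | succ n ih => rw [Function.iterate_succ_apply']; exact Aop_mem K hK hD ω _
  have pairing : ∀ m k, ⟪A^[k + m] e, e⟫ = ⟪A^[k] e, A^[m] e⟫ := by
    intro m
    induction m with
    | zero => intro k; simp
    | succ m ih =>
        intro k
        have h1 : k + (m + 1) = (k + 1) + m := by ring
        rw [h1, ih (k + 1), Function.iterate_succ_apply', Function.iterate_succ_apply',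
          Aop_symm K hK hD ω (hmem k) (hmem m)]
  set a : ℕ → ℝ := fun n => (⟪A^[n] e, e⟫).re with ha
  have ha_even : ∀ j, a (j + j) = ‖A^[j] e‖ ^ 2 := by
    intro j
    rw [ha]
    simp only [pairing j j]
    rw [inner_self_eq_norm_sq_to_K]
    norm_cast
  have ha_odd : ∀ j, a (j + j + 1) = (⟪A (A^[j] e), A^[j] e⟫).re := by
    intro j
    have h1 : j + j + 1 = (j + 1) + j := by ring
    rw [ha]
    simp only [h1, pairing j (j + 1), Function.iterate_succ_apply']
  have hanti : Antitone a := by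
    refine antitone_nat_of_succ_le fun n => ?_
    rcases Nat.even_or_odd n with ⟨j, hj⟩ | ⟨j, hj⟩
    · subst hj
      rw [ha_even j]
      have := ha_odd j
      rw [show j + j + 1 = (j + j) + 1 from rfl] at this
      rw [this]
      exact re_inner_Aop_le K hK hD ω hω0 hωsum (hmem j)
    · subst hj
      have h2 : 2 * j + 1 + 1 = (j + 1) + (j + 1) := by ring
      have h3 : 2 * j + 1 = j + j + 1 := by ring
      rw [h2, h3, ha_even (j + 1), ha_odd j, Function.iterate_succ_apply']
      exact norm_Aop_sq_le K hK hD ω hω0 hωsum (hmem j)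
  have hnonneg : ∀ n, 0 ≤ a n := by
    intro n
    rcases Nat.even_or_odd n with ⟨j, hj⟩ | ⟨j, hj⟩
    · subst hj; rw [ha_even j]; exact sq_nonneg _
    · subst hj
      have h3 : 2 * j + 1 = j + j + 1 := by ring
      rw [h3, ha_odd j]
      exact re_inner_Aop_nonneg K hK hD ω hω0 (hmem j)
  have hbdd : BddBelow (Set.range a) := ⟨0, by rintro r ⟨n, rfl⟩; exact hnonneg n⟩
  have haconv : Tendsto a atTop (nhds (⨅ n, a n)) := tendsto_atTop_ciInf hanti hbdd
  set L : ℝ := ⨅ n, a n with hL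
  have hdist : ∀ k m, ‖A^[k] e - A^[m] e‖ ^ 2 = a (k + k) - 2 * a (k + m) + a (m + m) := by
    intro k m
    have h1 := norm_sub_sq (𝕜 := ℂ) (A^[k] e) (A^[m] e)
    have h2 : (⟪A^[k] e, A^[m] e⟫).re = a (k + m) := by rw [ha]; simp only [pairing m k]
    have h3 : ‖A^[k] e‖ ^ 2 = a (k + k) := (ha_even k).symm
    have h4 : ‖A^[m] e‖ ^ 2 = a (m + m) := (ha_even m).symm
    rw [h1, ← h2, ← h3, ← h4]
    norm_num [RCLike.re_to_complex]
  have hcauchy : CauchySeq (fun n => A^[n] e) := by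
    rw [Metric.cauchySeq_iff]
    intro ε hε
    have hδ : (0 : ℝ) < ε ^ 2 / 4 := by positivity
    obtain ⟨n0, hn0⟩ := (Metric.tendsto_atTop.mp haconv) (ε ^ 2 / 4) hδ
    refine ⟨n0, fun k hk m hm => ?_⟩
    have e1 := hn0 (k + k) (le_trans hk (Nat.le_add_right _ _))
    have e2 := hn0 (k + m) (le_trans hk (Nat.le_add_right _ _))
    have e3 := hn0 (m + m) (le_trans hm (Nat.le_add_right _ _))
    rw [Real.dist_eq, abs_lt] at e1 e2 e3
    have hsq : ‖A^[k] e - A^[m] e‖ ^ 2 < ε ^ 2 := by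
      rw [hdist k m]; nlinarith
    have : ‖A^[k] e - A^[m] e‖ < ε := by nlinarith [norm_nonneg (A^[k] e - A^[m] e)]
    rw [dist_eq_norm]
    exact this
  obtain ⟨g, hg⟩ := cauchySeq_tendsto_of_complete hcauchy
  have hgK : g ∈ K := hK.mem_of_tendsto hg (Filter.Eventually.of_forall hmem)
  have hAcont : Continuous A := by
    have : LipschitzWith 1 A := by
      refine LipschitzWith.of_dist_le_mul fun x y => ?_
      rw [dist_eq_norm, dist_eq_norm, NNReal.coe_one, one_mul, ← Aop_sub K hK hD ω]
      exact Aop_norm_le K hK hD ω hω0 hωsum _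
    exact this.continuous
  have hfix : A g = g := by
    have h1 : Tendsto (fun n => A (A^[n] e)) atTop (nhds (A g)) :=
      (hAcont.tendsto g).comp hg
    have h2 : Tendsto (fun n => A (A^[n] e)) atTop (nhds g) := by
      have : (fun n => A (A^[n] e)) = fun n => A^[n + 1] e := by
        funext n; rw [Function.iterate_succ_apply']
      rw [this]
      exact hg.comp (tendsto_add_atTop_nat 1)
    exact tendsto_nhds_unique h1 h2
  exact ⟨g, hgK, hfix, hg⟩


lemma fixedpoint_chiMul_zero (hω0 : ∀ m, 0 < ω m) (hωsum : ∑ m, ω m = 1) {g : L2Space N}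
    (hg : g ∈ K) (hfix : Aop K hK hD ω g = g) (m : Fin M) : chiMul (hD m) g = 0 := by
  have h1 : (⟪Aop K hK hD ω g, g⟫).re = ‖g‖ ^ 2 := by
    rw [hfix, inner_self_eq_norm_sq_to_K]
    norm_cast
  rw [inner_Aop_self K hK hD ω hg, Complex.ofReal_re] at h1
  have h2 : ∀ m, ‖g - chiMul (hD m) g‖ ^ 2 = ‖g‖ ^ 2 - ‖chiMul (hD m) g‖ ^ 2 :=
    fun m => norm_sub_chiMul_sq (hD m) g
  have h3 : ∑ m, ω m * ‖chiMul (hD m) g‖ ^ 2 = 0 := by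
    have h4 : ∑ m, ω m * ‖g - chiMul (hD m) g‖ ^ 2
        = ∑ m, (ω m * ‖g‖ ^ 2 - ω m * ‖chiMul (hD m) g‖ ^ 2) := by
      refine Finset.sum_congr rfl fun m _ => ?_
      rw [h2 m]; ring
    rw [h4, Finset.sum_sub_distrib, ← Finset.sum_mul, hωsum, one_mul] at h1
    linarith
  have h5 : ∀ m ∈ Finset.univ, (0 : ℝ) ≤ ω m * ‖chiMul (hD m) g‖ ^ 2 :=
    fun m _ => mul_nonneg (hω0 m).le (sq_nonneg _)
  have h6 := (Finset.sum_eq_zero_iff_of_nonneg h5).mp h3 m (Finset.mem_univ m)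
  have h7 : ‖chiMul (hD m) g‖ ^ 2 = 0 := by
    rcases mul_eq_zero.mp h6 with h | h
    · exact absurd h (ne_of_gt (hω0 m))
    · exact h
  rw [← norm_eq_zero]
  exact pow_eq_zero_iff two_ne_zero |>.mp h7

end Aop
end Aux10

namespace Aux10b

open Complex Real

open scoped RealInnerProductSpace

variable {N : ℕ}

local notation "V" => EuclideanSpace ℝ (Fin N)

lemma psi_real (F : V → ℂ) (hFi : Integrable F) (x0 v : V) (s : ℝ) :
    (∫ k : V, Complex.exp (((2 * π * ⟪k, x0⟫ : ℝ) : ℂ) * Complex.I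
        + (s : ℂ) * (((2 * π * ⟪k, v⟫ : ℝ) : ℂ) * Complex.I)) * F k)
      = 𝓕⁻ F (x0 + s • v) := by
  rw [Real.fourierInv_eq']
  refine integral_congr_ae (Filter.Eventually.of_forall fun k => ?_)
  simp only [smul_eq_mul]
  congr 2
  rw [inner_add_right, real_inner_smul_right]
  push_cast
  ring

lemma psi_differentiable {S : Set V} (hS : IsCompact S) (F : V → ℂ) (hFi : Integrable F)
    (hFs : ∀ k, k ∉ S → F k = 0) (x0 v : V) :
    Differentiable ℂ (fun t : ℂ => ∫ k : V, Complex.exp (((2 * π * ⟪k, x0⟫ : ℝ) : ℂ) * Complex.I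
        + t * (((2 * π * ⟪k, v⟫ : ℝ) : ℂ) * Complex.I)) * F k) := by
  obtain ⟨R0, hR0⟩ := (Metric.isBounded_iff_subset_closedBall 0).mp hS.isBounded
  set R : ℝ := max R0 0 with hR
  have hRS : S ⊆ Metric.closedBall 0 R :=
    hR0.trans (Metric.closedBall_subset_closedBall (le_max_left _ _))
  have hRnn : 0 ≤ R := le_max_right _ _
  set a : V → ℂ := fun k => ((2 * π * ⟪k, x0⟫ : ℝ) : ℂ) * Complex.I with ha
  set b : V → ℂ := fun k => ((2 * π * ⟪k, v⟫ : ℝ) : ℂ) * Complex.I with hb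
  have ha_cont : Continuous a := by
    apply Continuous.mul _ continuous_const
    exact Complex.continuous_ofReal.comp
      ((continuous_const.mul (continuous_id.inner continuous_const)))
  have hb_cont : Continuous b := by
    apply Continuous.mul _ continuous_const
    exact Complex.continuous_ofReal.comp
      ((continuous_const.mul (continuous_id.inner continuous_const)))
  have hbound : ∀ (k : V), k ∈ S → ‖b k‖ ≤ 2 * π * R * ‖v‖ := by
    intro k hk
    have hk' : ‖k‖ ≤ R := by simpa using Metric.mem_closedBall.mp (hRS hk)
    rw [hb]
    simp only [norm_mul, Complex.norm_I, mul_one, Complex.norm_real, Real.norm_eq_abs]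
    simp only [_root_.abs_two, _root_.abs_of_nonneg Real.pi_pos.le]
    calc 2 * π * |⟪k, v⟫| ≤ 2 * π * (‖k‖ * ‖v‖) := by
          have := abs_real_inner_le_norm k v
          nlinarith [Real.pi_pos]
      _ ≤ 2 * π * R * ‖v‖ := by
          have h9 : ‖k‖ * ‖v‖ ≤ R * ‖v‖ := mul_le_mul_of_nonneg_right hk' (norm_nonneg v)
          nlinarith [Real.pi_pos]
  -- re of exponent bound
  have hre : ∀ (t : ℂ) (k : V), k ∈ S → (a k + t * b k).re ≤ ‖t‖ * (2 * π * R * ‖v‖) := by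
    intro t k hk
    have h1 : (a k).re = 0 := by rw [ha]; simp
    have h2 : (t * b k).re ≤ ‖t * b k‖ := Complex.re_le_norm _
    rw [Complex.add_re, h1, zero_add]
    calc (t * b k).re ≤ ‖t * b k‖ := h2
      _ = ‖t‖ * ‖b k‖ := norm_mul _ _
      _ ≤ ‖t‖ * (2 * π * R * ‖v‖) := by
          exact mul_le_mul_of_nonneg_left (hbound k hk) (norm_nonneg t)
  intro t0
  set β : ℝ := (‖t0‖ + 1) * (2 * π * R * ‖v‖) with hβ
  have hβnn : 0 ≤ 2 * π * R * ‖v‖ := by positivity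
  set bound : V → ℝ := fun k => (2 * π * R * ‖v‖) * Real.exp β * ‖F k‖ with hbound'
  have hmeas : ∀ t : ℂ, AEStronglyMeasurable
      (fun k : V => Complex.exp (a k + t * b k) * F k) volume := by
    intro t
    exact ((Complex.continuous_exp.comp
      (ha_cont.add (continuous_const.mul hb_cont))).aestronglyMeasurable).mul
      hFi.aestronglyMeasurable
  have habs : ∀ (t : ℂ) (k : V), ‖t‖ ≤ ‖t0‖ + 1 →
      ‖Complex.exp (a k + t * b k) * F k‖ ≤ Real.exp β * ‖F k‖ := by
    intro t k ht
    by_cases hk : k ∈ S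
    · rw [norm_mul, Complex.norm_exp]
      have h3 : (a k + t * b k).re ≤ β := by
        refine (hre t k hk).trans ?_
        exact mul_le_mul_of_nonneg_right ht hβnn
      exact mul_le_mul_of_nonneg_right (Real.exp_le_exp.mpr h3) (norm_nonneg _)
    · simp [hFs k hk]
  have h_int : ∀ t : ℂ, ‖t‖ ≤ ‖t0‖ + 1 →
      Integrable (fun k : V => Complex.exp (a k + t * b k) * F k) volume := by
    intro t ht
    refine Integrable.mono' (hFi.norm.const_mul (Real.exp β)) (hmeas t) ?_
    exact Filter.Eventually.of_forall fun k => habs t k ht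
  have key := hasDerivAt_integral_of_dominated_loc_of_deriv_le (μ := (volume : Measure V))
    (F := fun (t : ℂ) k => Complex.exp (a k + t * b k) * F k)
    (F' := fun (t : ℂ) k => b k * Complex.exp (a k + t * b k) * F k)
    (x₀ := t0) (bound := bound) (Metric.ball_mem_nhds t0 one_pos)
    (Filter.Eventually.of_forall fun t => hmeas t)
    (h_int t0 (by linarith))
    ?_ ?_ ?_ ?_
  · exact (key.2).differentiableAt
  · -- measurability of F' t0
    exact (((hb_cont.mul (Complex.continuous_exp.comp
      (ha_cont.add (continuous_const.mul hb_cont)))).aestronglyMeasurable).mul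
      hFi.aestronglyMeasurable)
  · -- bound
    refine Filter.Eventually.of_forall fun k => fun t ht => ?_
    by_cases hk : k ∈ S
    · rw [norm_mul, norm_mul, Complex.norm_exp]
      have h4 : ‖b k‖ ≤ 2 * π * R * ‖v‖ := hbound k hk
      have h5 : (a k + t * b k).re ≤ β := by
        refine (hre t k hk).trans ?_
        refine mul_le_mul_of_nonneg_right ?_ hβnn
        have hd : ‖t - t0‖ < 1 := by
          simpa [Complex.dist_eq] using Metric.mem_ball.mp ht
        calc ‖t‖ = ‖t - t0 + t0‖ := by rw [sub_add_cancel]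
          _ ≤ ‖t - t0‖ + ‖t0‖ := norm_add_le _ _
          _ ≤ ‖t0‖ + 1 := by linarith
      have h7 : Real.exp (a k + t * b k).re ≤ Real.exp β := Real.exp_le_exp.mpr h5
      have h10 : ‖b k‖ * Real.exp (a k + t * b k).re
          ≤ (2 * π * R * ‖v‖) * Real.exp β :=
        mul_le_mul h4 h7 (Real.exp_pos _).le hβnn
      exact mul_le_mul_of_nonneg_right h10 (norm_nonneg _)
    · simp [hFs k hk, hbound']
  · exact hFi.norm.const_mul (2 * π * R * ‖v‖ * Real.exp β)
  · -- HasDerivAt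
    refine Filter.Eventually.of_forall fun k => fun t _ => ?_
    have h8 : HasDerivAt (fun t : ℂ => a k + t * b k) (b k) t := by
      simpa using (hasDerivAt_mul_const (b k)).const_add (a k)
    have h9 : HasDerivAt (fun y : ℂ => Complex.exp (a k + y * b k) * F k)
        (Complex.exp (a k + t * b k) * b k * F k) t := (h8.cexp).mul_const (F k)
    exact h9.congr_deriv (by ring)


lemma fourierInv_continuous (F : V → ℂ) (hFi : Integrable F) : Continuous (𝓕⁻ F) := by
  refine VectorFourier.fourierIntegral_continuous Real.continuous_fourierChar ?_ hFi
  exact (continuous_inner (𝕜 := ℝ) (E := V)).neg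

lemma fourierInv_eq_zero_of_ball {S : Set V} (hS : IsCompact S) (F : V → ℂ)
    (hFi : Integrable F) (hFs : ∀ k, k ∉ S → F k = 0) (x0 : V) (r : ℝ) (hr : 0 < r)
    (hzero : ∀ x ∈ Metric.ball x0 r, 𝓕⁻ F x = 0) : ∀ y : V, 𝓕⁻ F y = 0 := by
  intro y
  by_cases hv : y = x0
  · exact hv ▸ hzero x0 (Metric.mem_ball_self hr)
  set v : V := y - x0 with hvdef
  have hvne : v ≠ 0 := sub_ne_zero.mpr hv
  have hvnorm : (0 : ℝ) < ‖v‖ := norm_pos_iff.mpr hvne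
  set ψ : ℂ → ℂ := fun t => ∫ k : V, Complex.exp (((2 * π * ⟪k, x0⟫ : ℝ) : ℂ) * Complex.I
      + t * (((2 * π * ⟪k, v⟫ : ℝ) : ℂ) * Complex.I)) * F k with hψ
  have hdiff : Differentiable ℂ ψ := psi_differentiable hS F hFi hFs x0 v
  have hreal : ∀ s : ℝ, ψ (s : ℂ) = 𝓕⁻ F (x0 + s • v) := fun s => psi_real F hFi x0 v s
  set s : ℕ → ℝ := fun n => r / (2 * ‖v‖ * (n + 1)) with hs
  have hspos : ∀ n, 0 < s n := by
    intro n
    apply div_pos hr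
    positivity
  have hzs : ∀ n : ℕ, ψ ((s n : ℝ) : ℂ) = 0 := by
    intro n
    rw [hreal (s n)]
    apply hzero
    rw [Metric.mem_ball, dist_eq_norm, add_sub_cancel_left, norm_smul, Real.norm_eq_abs,
      abs_of_pos (hspos n)]
    have h1 : s n * ‖v‖ = r / (2 * (n + 1)) := by
      rw [hs]
      field_simp
    rw [h1]
    have h2 : (0 : ℝ) < 2 * ((n : ℝ) + 1) := by positivity
    rw [div_lt_iff₀ h2]
    nlinarith
  have hA : AnalyticOnNhd ℂ ψ Set.univ :=
    hdiff.differentiableOn.analyticOnNhd isOpen_univ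
  have htend : Tendsto (fun n : ℕ => ((s n : ℝ) : ℂ)) atTop (nhdsWithin 0 {(0 : ℂ)}ᶜ) := by
    apply tendsto_nhdsWithin_of_tendsto_nhds_of_eventually_within
    · have h3 : Tendsto s atTop (nhds 0) := by
        have h4 : s = fun n : ℕ => (r / (2 * ‖v‖)) * (1 / ((n : ℝ) + 1)) := by
          funext n
          rw [hs]
          field_simp
        rw [h4]
        have := tendsto_one_div_add_atTop_nhds_zero_nat.const_mul (r / (2 * ‖v‖))
        simpa using this
      have h5 := (Complex.continuous_ofReal.tendsto 0).comp h3
      simpa [Function.comp_def] using h5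
    · refine Filter.Eventually.of_forall fun n => ?_
      simp only [Set.mem_compl_iff, Set.mem_singleton_iff]
      exact_mod_cast (hspos n).ne'
  have hfreq : ∃ᶠ z in nhdsWithin 0 {(0 : ℂ)}ᶜ, ψ z = 0 :=
    htend.frequently (Filter.Frequently.of_forall hzs)
  have hEq : Set.EqOn ψ 0 Set.univ :=
    hA.eqOn_zero_of_preconnected_of_frequently_eq_zero isPreconnected_univ (Set.mem_univ 0) hfreq
  have h6 : ψ 1 = 0 := hEq (Set.mem_univ 1)
  have h7 := hreal 1
  rw [Complex.ofReal_one] at h7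
  rw [h7, one_smul, add_sub_cancel] at h6
  exact h6

end Aux10b

/-- For `h ∈ B_S`, bounded measurable sets `D_1, …, D_M` each with nonempty
interior, and convex weights `ω_m ∈ (0,1]` with `∑ ω_m = 1`, the iterates
`f_0 = ∑ m, P_S(χ_{D_m} h)`, `f_{k+1} = T_h f_k` of
`T_h f = ∑ m, ω_m P_S(f + χ_{D_m}(h − f))` converge strongly to `h`: `‖f_k − h‖ → 0`. -/
theorem iterates_tendsto_multi (N : ℕ) (hN : 1 ≤ N)
    (S : Set (EuclideanSpace ℝ (Fin N))) (hS : IsCompact S)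
    (K : Submodule ℂ (L2Space N))
    (hKset : (K : Set (L2Space N)) = {f : L2Space N | IsBandlimited S f})
    (hK : IsClosed (K : Set (L2Space N)))
    (h : L2Space N) (hh : IsBandlimited S h)
    (M : ℕ) (D : Fin M → Set (EuclideanSpace ℝ (Fin N))) (hD : ∀ m, MeasurableSet (D m))
    (hDbdd : ∀ m, Bornology.IsBounded (D m)) (hDint : ∀ m, (interior (D m)).Nonempty)
    (ω : Fin M → ℝ) (hω : ∀ m, ω m ∈ Set.Ioc (0 : ℝ) 1) (hωsum : ∑ m, ω m = 1)
    (f : ℕ → L2Space N) (hf0 : f 0 = ∑ m, projOf K hK (chiMul (hD m) h))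
    (hfrec : ∀ k : ℕ, f (k + 1) = Tmulti K hK hD ω h (f k)) :
    Tendsto (fun k => ‖f k - h‖) atTop (nhds 0) := by
  classical
  have hhK : h ∈ K := by
    have h1 : h ∈ (K : Set (L2Space N)) := by rw [hKset]; exact hh
    exact h1
  have hω0 : ∀ m, 0 ≤ ω m := fun m => (hω m).1.le
  have hωpos : ∀ m, 0 < ω m := fun m => (hω m).1
  set A : L2Space N → L2Space N := Aux10.Aop K hK hD ω with hA
  have hf0K : f 0 ∈ K := by
    rw [hf0]
    exact Submodule.sum_mem _ fun m _ => Aux10.projOf_mem K hK _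
  have heK : f 0 - h ∈ K := K.sub_mem hf0K hhK
  have hPh : projOf K hK h = h := Aux10.projOf_eq_self K hK hhK
  have hrec : ∀ k, f k - h = A^[k] (f 0 - h) := by
    intro k
    induction k with
    | zero => simp
    | succ k ih =>
      rw [Function.iterate_succ_apply', ← ih, hfrec k]
      have key : ∀ m : Fin M,
          ω m • projOf K hK (f k + chiMul (hD m) (h - f k)) - ω m • h
            = ω m • projOf K hK ((f k - h) - chiMul (hD m) (f k - h)) := by
        intro m
        rw [← smul_sub]
        congr 1
        calc projOf K hK (f k + chiMul (hD m) (h - f k)) - h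
            = projOf K hK (f k + chiMul (hD m) (h - f k)) - projOf K hK h := by rw [hPh]
          _ = projOf K hK ((f k + chiMul (hD m) (h - f k)) - h) :=
              (Aux10.projOf_sub K hK _ _).symm
          _ = projOf K hK ((f k - h) - chiMul (hD m) (f k - h)) := by
              congr 1
              rw [Aux10.chiMul_sub (hD m) h (f k), Aux10.chiMul_sub (hD m) (f k) h]
              abel
      calc Tmulti K hK hD ω h (f k) - h
          = (∑ m, ω m • projOf K hK (f k + chiMul (hD m) (h - f k))) - ∑ m, ω m • h := by
            rw [Tmulti, ← Finset.sum_smul, hωsum, one_smul]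
        _ = ∑ m, (ω m • projOf K hK (f k + chiMul (hD m) (h - f k)) - ω m • h) :=
            (Finset.sum_sub_distrib _ _).symm
        _ = ∑ m, ω m • projOf K hK ((f k - h) - chiMul (hD m) (f k - h)) :=
            Finset.sum_congr rfl fun m _ => key m
        _ = A (f k - h) := rfl
  obtain ⟨g, hgK, hfix, htend⟩ := Aux10.tendsto_iterate K hK hD ω hω0 hωsum heK
  have htend' : Tendsto (fun k => f k - h) atTop (nhds g) := by
    have h2 : (fun k => f k - h) = fun k => A^[k] (f 0 - h) := funext hrec
    rw [h2]
    exact htend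
  have hne : Nonempty (Fin M) := by
    by_contra hne
    have h3 : (∑ m, ω m) = 0 := Finset.sum_eq_zero fun m _ => absurd ⟨m⟩ hne
    rw [hωsum] at h3
    exact one_ne_zero h3
  obtain ⟨m0⟩ := hne
  have hchi0 : chiMul (hD m0) g = 0 :=
    Aux10.fixedpoint_chiMul_zero K hK hD ω hωpos hωsum hgK hfix m0
  have hgB : IsBandlimited S g := by
    have h4 : g ∈ (K : Set (L2Space N)) := hgK
    rw [hKset] at h4
    exact h4
  obtain ⟨F, hFi, hFs, hgF⟩ := hgB
  have hind : (D m0).indicator (g : EuclideanSpace ℝ (Fin N) → ℂ) =ᵐ[volume] 0 := by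
    have h5 := Aux10.chiMul_ae (hD m0) g
    rw [hchi0] at h5
    have h6 := Lp.coeFn_zero (E := ℂ) (p := 2)
      (μ := (volume : Measure (EuclideanSpace ℝ (Fin N))))
    exact h5.symm.trans h6
  obtain ⟨x0, hx0⟩ := hDint m0
  obtain ⟨r, hr, hball⟩ := Metric.isOpen_iff.mp isOpen_interior x0 hx0
  have hball' : Metric.ball x0 r ⊆ D m0 := hball.trans interior_subset
  have hφcont : Continuous (𝓕⁻ F) := Aux10b.fourierInv_continuous F hFi
  have hae : (𝓕⁻ F) =ᵐ[volume.restrict (Metric.ball x0 r)] 0 := by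
    filter_upwards [ae_restrict_of_ae hind, ae_restrict_of_ae hgF,
      ae_restrict_mem measurableSet_ball] with x h7 h8 h9
    have hxD : x ∈ D m0 := hball' h9
    rw [Set.indicator_of_mem hxD] at h7
    simp only [Pi.zero_apply] at h7 ⊢
    rw [← h8]
    exact h7
  have hEqOn : Set.EqOn (𝓕⁻ F) 0 (Metric.ball x0 r) :=
    MeasureTheory.Measure.eqOn_of_ae_eq hae hφcont.continuousOn continuousOn_const
      (by rw [Metric.isOpen_ball.interior_eq]; exact subset_closure)
  have hzero : ∀ x ∈ Metric.ball x0 r, 𝓕⁻ F x = 0 := fun x hx => hEqOn hx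
  have hφ0 : ∀ y, 𝓕⁻ F y = 0 :=
    Aux10b.fourierInv_eq_zero_of_ball hS F hFi hFs x0 r hr hzero
  have hg0 : g = 0 := by
    apply Lp.ext
    filter_upwards [hgF, Lp.coeFn_zero (E := ℂ) (p := 2)
      (μ := (volume : Measure (EuclideanSpace ℝ (Fin N))))] with x h10 h11
    rw [h10, hφ0 x, h11, Pi.zero_apply]
  rw [hg0] at htend'
  have hfinal : Tendsto (fun k => ‖f k - h‖) atTop (nhds ‖(0 : L2Space N)‖) :=
    (continuous_norm.tendsto _).comp htend'
  simpa using hfinal
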